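/- In the A_1 case (one-row tableaux over {1,2}), the total energies E_l = E_l(b) of a path b = b_1 ⊗ ⋯ ⊗ b_L, defined via the carrier recursion with highest carrier u_l ∈ B^{1,l}, form a sequence such that the differences E_l − E_{l−1} (with E_0 = 0) are weakly decreasing nonnegative integers; equivalently, there exists a partition μ with E_l = Q_l(μ) = Σ_i min(l, μ_i) for all l ≥ 1. -/

import Mathlib

/-- Schensted row insertion into a single row: returns the new row and the bumped entry. -/
def insertRow : List ℕ → ℕ → List ℕ × Option ℕ
  | [], x => ([x], none)
  | y :: ys, x =>
    if x < y then (x :: ys, some y)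
    else
      let p := insertRow ys x
      (y :: p.1, p.2)

/-- Schensted row insertion of a letter into a tableau (list of rows). -/
def rsInsert : List (List ℕ) → ℕ → List (List ℕ)
  | [], x => [[x]]
  | r :: rs, x =>
    match (insertRow r x).2 with
    | none => (insertRow r x).1 :: rs
    | some y => (insertRow r x).1 :: rsInsert rs y

/-- Successive insertion of a word. -/
def rsInsertWord (Y : List (List ℕ)) (w : List ℕ) : List (List ℕ) :=
  w.foldl rsInsert Y

/-- The row word of a tableau: rows read from bottom to top. -/
def rowWord (Y : List (List ℕ)) : List ℕ := Y.reverse.flatten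

/-- Length of the `i`-th row (the shape of the tableau). -/
def shapeAt (Y : List (List ℕ)) (i : ℕ) : ℕ := (Y.getD i []).length

/-- The highest element of `B^{r,s}`: row `i` filled with `i`. -/
def highestTab (r s : ℕ) : List (List ℕ) :=
  (List.range r).map fun i => List.replicate s (i + 1)

/-- Energy function: number of boxes of `(b' ← row(b))` outside the
concatenation of the shapes of `b` and `b'`. -/
def energyH (b b' : List (List ℕ)) : ℕ :=
  let Z := rsInsertWord b' (rowWord b)
  ∑ i ∈ Finset.range Z.length, (shapeAt Z i - (shapeAt b i + shapeAt b' i))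

/-- Semistandard Young tableau: rows weakly increasing, nonempty,
shape weakly decreasing, and columns strictly increasing. -/
def IsSSYT (Y : List (List ℕ)) : Prop :=
  (∀ r ∈ Y, List.Chain' (· ≤ ·) r) ∧
  (∀ r ∈ Y, r ≠ []) ∧
  List.Chain' (fun r s => s.length ≤ r.length ∧
    ∀ i < s.length, r.getD i 0 < s.getD i 0) Y



/-- a sorted row with p ones then q twos -/
def rowPQ (p q : ℕ) : List ℕ := List.replicate p 1 ++ List.replicate q 2

lemma sorted_binary (lst : List ℕ) (h : List.Chain' (· ≤ ·) lst)
    (h2 : ∀ x ∈ lst, x = 1 ∨ x = 2) :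
    lst = rowPQ (lst.count 1) (lst.count 2) := by
  rw [show List.Chain' (· ≤ ·) lst ↔ List.Pairwise (· ≤ ·) lst from List.isChain_iff_pairwise] at h
  induction lst with
  | nil => rfl
  | cons x xs ih =>
    rcases List.pairwise_cons.1 h with ⟨hx, hxs⟩
    rcases h2 x (by simp) with rfl | rfl
    · have := ih hxs (fun y hy => h2 y (by simp [hy]))
      rw [List.count_cons_self, List.count_cons_of_ne (by norm_num : (1:ℕ) ≠ 2)]
      show 1 :: xs = List.replicate (xs.count 1 + 1) 1 ++ List.replicate (xs.count 2) 2
      rw [List.replicate_succ, List.cons_append]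
      exact congrArg (List.cons 1) this
    · have hall : ∀ y ∈ xs, y = 2 := by
        intro y hy
        rcases h2 y (by simp [hy]) with rfl | rfl
        · exact absurd (hx 1 hy) (by norm_num)
        · rfl
      have hxs2 : xs = List.replicate xs.length 2 := List.eq_replicate_of_mem hall
      rw [hxs2]
      simp [rowPQ, List.count_replicate, List.count_cons, List.replicate_succ]

lemma insertRow_twos_two (k : ℕ) :
    insertRow (List.replicate k 2) 2 = (List.replicate (k+1) 2, none) := by
  induction k with
  | zero => rfl
  | succ k ih =>
    rw [List.replicate_succ, insertRow]
    simp [ih, List.replicate_succ]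

lemma insertRow_two (p q : ℕ) :
    insertRow (rowPQ p q) 2 = (rowPQ p (q+1), none) := by
  induction p with
  | zero =>
    simp only [rowPQ, List.replicate_zero, List.nil_append]
    exact insertRow_twos_two q
  | succ p ih =>
    rw [rowPQ, List.replicate_succ, List.cons_append, insertRow]
    simp only [rowPQ] at ih
    simp [ih, rowPQ, List.replicate_succ]

lemma insertRow_one (p q : ℕ) :
    insertRow (rowPQ p q) 1 =
      if q = 0 then (rowPQ (p+1) 0, none) else (rowPQ (p+1) (q-1), some 2) := by
  induction p with
  | zero =>
    cases q with
    | zero => rfl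
    | succ q =>
      simp only [rowPQ, List.replicate_zero, List.nil_append, List.replicate_succ,
        insertRow]
      norm_num [List.replicate_succ]
  | succ p ih =>
    rw [rowPQ, List.replicate_succ, List.cons_append, insertRow]
    simp only [rowPQ] at ih
    by_cases hq : q = 0
    · subst hq
      simp only [List.replicate_zero, List.append_nil, if_pos rfl] at ih
      simp [ih, rowPQ, List.replicate_succ]
    · simp only [if_neg hq] at ih
      simp [hq, ih, rowPQ, List.replicate_succ]

lemma rsInsertWord_cons (Y : List (List ℕ)) (x : ℕ) (w : List ℕ) :
    rsInsertWord Y (x :: w) = rsInsertWord (rsInsert Y x) w := rfl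

lemma rsInsert_one_row_two (p q : ℕ) (rs : List (List ℕ)) :
    rsInsert (rowPQ p q :: rs) 2 = rowPQ p (q+1) :: rs := by
  simp [rsInsert, insertRow_two]

lemma rsInsert_one_row_one_q0 (p : ℕ) (rs : List (List ℕ)) :
    rsInsert (rowPQ p 0 :: rs) 1 = rowPQ (p+1) 0 :: rs := by
  simp [rsInsert, insertRow_one]

lemma rsInsert_twos_two (m : ℕ) :
    rsInsert [List.replicate m 2] 2 = [List.replicate (m+1) 2] := by
  simp [rsInsert, insertRow_twos_two]

lemma rsInsert_two_rows_one (p q m : ℕ) (hq : q ≠ 0) :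
    rsInsert [rowPQ p q, List.replicate m 2] 1
      = [rowPQ (p+1) (q-1), List.replicate (m+1) 2] := by
  rw [rsInsert]
  rw [insertRow_one, if_neg hq]
  exact congrArg _ (rsInsert_twos_two m)

lemma rsInsert_single_one (p q : ℕ) (hq : q ≠ 0) :
    rsInsert [rowPQ p q] 1 = [rowPQ (p+1) (q-1), [2]] := by
  rw [rsInsert]
  rw [insertRow_one, if_neg hq]
  rfl

lemma word_ones_two_rows (a : ℕ) : ∀ p q m : ℕ,
    rsInsertWord [rowPQ p q, List.replicate (m+1) 2] (List.replicate a 1)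
      = [rowPQ (p+a) (q - min a q), List.replicate (m+1+min a q) 2] := by
  induction a with
  | zero => intro p q m; simp [rsInsertWord]
  | succ a ih =>
    intro p q m
    rw [show (List.replicate (a+1) 1 : List ℕ) = 1 :: List.replicate a 1 from rfl,
      rsInsertWord_cons]
    cases q with
    | zero =>
      rw [rsInsert_one_row_one_q0, ih]
      simp [Nat.add_assoc, Nat.add_comm 1 a]
    | succ q =>
      rw [rsInsert_two_rows_one p (q+1) (m+1) (by omega)]
      simp only [Nat.add_sub_cancel]
      rw [ih (p+1) q (m+1)]
      have h1 : p + 1 + a = p + (a+1) := by omega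
      have h2 : min (a+1) (q+1) = min a q + 1 := by omega
      rw [h1, h2]
      have h3 : q + 1 - (min a q + 1) = q - min a q := by omega
      have h4 : m + 1 + 1 + min a q = m + 1 + (min a q + 1) := by omega
      rw [h3, h4]

lemma word_ones_one_row (a : ℕ) : ∀ p q : ℕ,
    rsInsertWord [rowPQ p q] (List.replicate a 1)
      = if min a q = 0 then [rowPQ (p+a) (q - min a q)]
        else [rowPQ (p+a) (q - min a q), List.replicate (min a q) 2] := by
  induction a with
  | zero => intro p q; simp [rsInsertWord]
  | succ a ih =>
    intro p q
    rw [List.replicate_succ, rsInsertWord_cons]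
    cases q with
    | zero =>
      rw [rsInsert_one_row_one_q0, ih]
      simp [Nat.add_assoc, Nat.add_comm 1 a]
    | succ q =>
      rw [rsInsert_single_one p (q+1) (by omega)]
      simp only [Nat.add_sub_cancel]
      have : ([2] : List ℕ) = List.replicate (0+1) 2 := rfl
      rw [this, word_ones_two_rows a (p+1) q 0]
      have h2 : min (a+1) (q+1) = min a q + 1 := by omega
      rw [if_neg (by omega : ¬ min (a+1) (q+1) = 0), h2]
      have h1 : p + 1 + a = p + (a+1) := by omega
      have h3 : q + 1 - (min a q + 1) = q - min a q := by omega
      rw [h1, h3, show 0 + 1 + (a ⊓ q) = a ⊓ q + 1 from by omega]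

lemma word_twos (b : ℕ) : ∀ (p q : ℕ) (rs : List (List ℕ)),
    rsInsertWord (rowPQ p q :: rs) (List.replicate b 2) = rowPQ p (q+b) :: rs := by
  induction b with
  | zero => intro p q rs; simp [rsInsertWord]
  | succ b ih =>
    intro p q rs
    rw [List.replicate_succ, rsInsertWord_cons, rsInsert_one_row_two, ih]
    have : q + 1 + b = q + (b+1) := by omega
    rw [this]

lemma rsInsertWord_append (Y : List (List ℕ)) (w1 w2 : List ℕ) :
    rsInsertWord Y (w1 ++ w2) = rsInsertWord (rsInsertWord Y w1) w2 :=
  List.foldl_append ..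

/-- The master computation: inserting the word `1^a 2^b` into the one-row
tableau `1^p 2^q`. -/
lemma word_main (p q a b : ℕ) :
    rsInsertWord [rowPQ p q] (rowPQ a b)
      = if min a q = 0 then [rowPQ (p+a) (q - min a q + b)]
        else [rowPQ (p+a) (q - min a q + b), List.replicate (min a q) 2] := by
  rw [show rowPQ a b = List.replicate a 1 ++ List.replicate b 2 from rfl,
    rsInsertWord_append, word_ones_one_row]
  by_cases h : min a q = 0
  · rw [if_pos h, if_pos h, word_twos]
  · rw [if_neg h, if_neg h, word_twos]

lemma rowPQ_length (p q : ℕ) : (rowPQ p q).length = p + q := by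
  simp [rowPQ]

lemma energy_formula (a b p q : ℕ) :
    energyH [rowPQ a b] [rowPQ p q] = min a q := by
  have hrow : rowWord [rowPQ a b] = rowPQ a b := by simp [rowWord]
  rw [energyH]
  simp only [hrow, word_main]
  by_cases h : min a q = 0
  · rw [if_pos h]
    simp [shapeAt, rowPQ_length, h]
    omega
  · rw [if_neg h]
    simp only [List.length_cons, List.length_singleton]
    rw [Finset.sum_range_succ, Finset.sum_range_succ]
    simp [shapeAt, rowPQ_length]
    omega

lemma rowPQ_count1 (p q : ℕ) : (rowPQ p q).count 1 = p := by
  simp [rowPQ, List.count_replicate]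

lemma rowPQ_count2 (p q : ℕ) : (rowPQ p q).count 2 = q := by
  simp [rowPQ, List.count_replicate]

lemma extract (l a b p q A B P Q : ℕ) (hab : a + b = l) (hAB : A + B = l)
    (heq : rsInsertWord [rowPQ p q] (rowPQ a b) = rsInsertWord [rowPQ A B] (rowPQ P Q)) :
    A + min a q = min (a + p) l := by
  rw [word_main, word_main] at heq
  by_cases h1 : min a q = 0 <;> by_cases h2 : min P B = 0
  · rw [if_pos h1, if_pos h2] at heq
    have hc : p + a = A + P := by
      have := congrArg (List.count 1) (List.head_eq_of_cons_eq heq)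
      simpa [rowPQ_count1] using this
    omega
  · rw [if_pos h1, if_neg h2] at heq
    exact absurd (congrArg List.length heq) (by simp)
  · rw [if_neg h1, if_pos h2] at heq
    exact absurd (congrArg List.length heq) (by simp)
  · rw [if_neg h1, if_neg h2] at heq
    have hr := List.head_eq_of_cons_eq heq
    have ht := List.tail_eq_of_cons_eq heq
    have hc : p + a = A + P := by
      have := congrArg (List.count 1) hr
      simpa [rowPQ_count1] using this
    have hm : min a q = min P B := by
      have := congrArg List.length (List.head_eq_of_cons_eq ht)
      simpa using this
    omega

/-- `f` is the pointwise minimum of the affine functions `l ↦ k*l + c` for `(k,c) ∈ F`. -/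
def MinRep (F : List (ℕ × ℕ)) (f : ℕ → ℕ) : Prop :=
  ∀ l, (∀ kc ∈ F, f l ≤ kc.1 * l + kc.2) ∧ ∃ kc ∈ F, f l = kc.1 * l + kc.2

lemma minrep_min {F1 F2 f g} (h1 : MinRep F1 f) (h2 : MinRep F2 g) :
    MinRep (F1 ++ F2) (fun l => min (f l) (g l)) := by
  intro l
  obtain ⟨ub1, kc1, hkc1, he1⟩ := h1 l
  obtain ⟨ub2, kc2, hkc2, he2⟩ := h2 l
  constructor
  · intro kc hkc
    rcases List.mem_append.1 hkc with h | h
    · exact le_trans (min_le_left _ _) (ub1 kc h)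
    · exact le_trans (min_le_right _ _) (ub2 kc h)
  · rcases le_total (f l) (g l) with h | h
    · exact ⟨kc1, List.mem_append.2 (Or.inl hkc1), by show min (f l) (g l) = _; omega⟩
    · exact ⟨kc2, List.mem_append.2 (Or.inr hkc2), by show min (f l) (g l) = _; omega⟩

lemma minrep_add_const {F f} (c : ℕ) (h : MinRep F f) :
    MinRep (F.map fun kc => (kc.1, kc.2 + c)) (fun l => f l + c) := by
  intro l
  obtain ⟨ub, kc, hkc, he⟩ := h l
  constructor
  · intro kc' hkc'
    obtain ⟨kc0, hkc0, rfl⟩ := List.mem_map.1 hkc'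
    have := ub kc0 hkc0
    simp only
    omega
  · exact ⟨(kc.1, kc.2 + c), List.mem_map.2 ⟨kc, hkc, rfl⟩, by simp; omega⟩

lemma minrep_add_l {F f} (h : MinRep F f) :
    MinRep (F.map fun kc => (kc.1 + 1, kc.2)) (fun l => f l + l) := by
  intro l
  obtain ⟨ub, kc, hkc, he⟩ := h l
  constructor
  · intro kc' hkc'
    obtain ⟨kc0, hkc0, rfl⟩ := List.mem_map.1 hkc'
    have := ub kc0 hkc0
    simp only [Nat.add_mul, Nat.one_mul]
    omega
  · refine ⟨(kc.1 + 1, kc.2), List.mem_map.2 ⟨kc, hkc, rfl⟩, ?_⟩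
    simp only [Nat.add_mul, Nat.one_mul]
    omega

lemma minrep_congr {F f g} (h : MinRep F f) (hfg : ∀ l, f l = g l) : MinRep F g := by
  intro l; rw [← hfg l]; exact h l

lemma minrep_mono {F f} (h : MinRep F f) (l : ℕ) : f l ≤ f (l+1) := by
  obtain ⟨ub, _, _⟩ := h l
  obtain ⟨_, kc, hkc, he⟩ := h (l+1)
  have := ub kc hkc
  have : kc.1 * l ≤ kc.1 * (l+1) := Nat.mul_le_mul_left _ (by omega)
  omega

lemma minrep_concave {F f} (h : MinRep F f) (l : ℕ) :
    f (l+2) + f l ≤ 2 * f (l+1) := by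
  obtain ⟨_, kc, hkc, he⟩ := h (l+1)
  obtain ⟨ub2, _, _⟩ := h (l+2)
  obtain ⟨ub0, _, _⟩ := h l
  have h2 := ub2 kc hkc
  have h0 := ub0 kc hkc
  have key : kc.1 * (l+2) + kc.2 + (kc.1 * l + kc.2) = 2 * (kc.1 * (l+1) + kc.2) := by ring
  omega

/-- Number of 1's in the carrier, abstract recursion. -/
def aSeq (p q : ℕ → ℕ) (l : ℕ) : ℕ → ℕ
  | 0 => l
  | j+1 => min (aSeq p q l j + p j) l - min (aSeq p q l j) (q j)

lemma aSeq_le (p q : ℕ → ℕ) (l : ℕ) : ∀ j, aSeq p q l j ≤ l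
  | 0 => le_refl l
  | j+1 => le_trans (Nat.sub_le _ _) (min_le_right _ _)

/-- Partial energy. -/
def Epart (p q : ℕ → ℕ) (n l : ℕ) : ℕ :=
  ∑ j ∈ Finset.range n, min (aSeq p q l j) (q j)

lemma exists_minrep (p q : ℕ → ℕ) (n : ℕ) :
    ∃ FS FT, MinRep FS (fun l => Epart p q n l) ∧
      MinRep FT (fun l => aSeq p q l n + Epart p q n l) := by
  induction n with
  | zero =>
    refine ⟨[(0,0)], [(1,0)], ?_, ?_⟩
    · intro l
      constructor
      · intro kc hkc
        simp at hkc
        simp [hkc, Epart]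
      · exact ⟨(0,0), by simp, by simp [Epart]⟩
    · intro l
      constructor
      · intro kc hkc
        simp at hkc
        simp [hkc, Epart, aSeq]
      · exact ⟨(1,0), by simp, by simp [Epart, aSeq]⟩
  | succ n ih =>
    obtain ⟨FS, FT, ihS, ihT⟩ := ih
    have hstep : ∀ l, Epart p q (n+1) l = Epart p q n l + min (aSeq p q l n) (q n) := by
      intro l; rw [Epart, Finset.sum_range_succ]; rfl
    refine ⟨FT ++ FS.map (fun kc => (kc.1, kc.2 + q n)),
      FT.map (fun kc => (kc.1, kc.2 + p n)) ++ FS.map (fun kc => (kc.1 + 1, kc.2)), ?_, ?_⟩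
    · refine minrep_congr (minrep_min ihT (minrep_add_const (q n) ihS)) ?_
      intro l
      show min (aSeq p q l n + Epart p q n l) (Epart p q n l + q n) = _
      rw [hstep l]
      omega
    · refine minrep_congr (minrep_min (minrep_add_const (p n) ihT) (minrep_add_l ihS)) ?_
      intro l
      show min ((aSeq p q l n + Epart p q n l) + p n) (Epart p q n l + l) = _
      rw [hstep l, show aSeq p q l (n+1) = min (aSeq p q l n + p n) l - min (aSeq p q l n) (q n) from rfl]
      have h1 := aSeq_le p q l n
      omega

lemma sum_map_range (f : ℕ → ℕ) (n : ℕ) :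
    ((List.range n).map f).sum = ∑ i ∈ Finset.range n, f i := by
  induction n with
  | zero => simp
  | succ n ih => rw [List.range_succ, Finset.sum_range_succ, List.map_append, List.sum_append, ih]; simp

lemma partition_of_minrep {F : List (ℕ × ℕ)} {E : ℕ → ℕ} (hF : MinRep F E)
    (hE0 : E 0 = 0) (Qs : ℕ) (hbound : ∀ l, E l ≤ Qs) :
    ∃ μ : List ℕ, List.Pairwise (· ≥ ·) μ ∧
      ∀ l, (μ.map (fun x => min l x)).sum = E l := by
  set d : ℕ → ℕ := fun k => E k - E (k-1) with hd
  have hmono := minrep_mono hF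
  have hconc := minrep_concave hF
  have hdsucc : ∀ k, d (k+1) = E (k+1) - E k := fun k => rfl
  have hEd : ∀ k, E (k+1) = E k + d (k+1) := by
    intro k; rw [hdsucc]; have := hmono k; omega
  have tele : ∀ l, E l = ∑ k ∈ Finset.range l, d (k+1) := by
    intro l
    induction l with
    | zero => simpa using hE0
    | succ l ih => rw [Finset.sum_range_succ, ← ih, hEd]
  have anti : ∀ k, d (k+2) ≤ d (k+1) := by
    intro k
    have h1 := hconc k
    have h2 := hmono k
    have h3 : E (k+1) ≤ E (k+2) := hmono (k+1)
    have e1 : d (k+2) = E (k+2) - E (k+1) := rfl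
    have e2 : d (k+1) = E (k+1) - E k := rfl
    rw [e1, e2]
    omega
  have dmono : ∀ k j, d (k+1+j) ≤ d (k+1) := by
    intro k j
    induction j with
    | zero => exact le_refl _
    | succ j ih =>
      have := anti (k+j)
      have he : k+1+(j+1) = k+j+2 := by omega
      have he2 : k+1+j = k+j+1 := by omega
      rw [he]
      rw [he2] at ih
      omega
  have dmono' : ∀ i k, 1 ≤ i → i ≤ k → d k ≤ d i := by
    intro i k hi hik
    obtain ⟨i', rfl⟩ : ∃ i', i = i' + 1 := ⟨i - 1, by omega⟩
    have := dmono i' (k - (i'+1))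
    have he : i'+1+(k-(i'+1)) = k := by omega
    rwa [he] at this
  set N := Qs + 1 with hN
  have vanish : ∀ k, N ≤ k → d k = 0 := by
    intro k hk
    by_contra hne
    have hk1 : 1 ≤ d k := by omega
    have : ∀ i ∈ Finset.range k, 1 ≤ d (i+1) := by
      intro i hi
      simp only [Finset.mem_range] at hi
      exact le_trans hk1 (dmono' (i+1) k (by omega) (by omega))
    have hsum : k ≤ E k := by
      rw [tele k]
      calc k = ∑ _i ∈ Finset.range k, 1 := by simp
      _ ≤ _ := Finset.sum_le_sum this
    have := hbound k
    omega
  set μf : ℕ → ℕ := fun i => ((Finset.range N).filter (fun k => i+1 ≤ d (k+1))).card with hμf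
  have key2 : ∀ l i, l+1 ≤ μf i ↔ i+1 ≤ d (l+1) := by
    intro l i
    constructor
    · intro h
      by_cases hex : ∃ k ∈ (Finset.range N).filter (fun k => i+1 ≤ d (k+1)), l ≤ k
      · obtain ⟨k, hk, hlk⟩ := hex
        simp only [Finset.mem_filter, Finset.mem_range] at hk
        have := dmono' (l+1) (k+1) (by omega) (by omega)
        omega
      · push_neg at hex
        have hsub : (Finset.range N).filter (fun k => i+1 ≤ d (k+1)) ⊆ Finset.range l := by
          intro k hk
          simp only [Finset.mem_range]
          have := hex k hk
          omega
        have := Finset.card_le_card hsub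
        simp only [Finset.card_range] at this
        have hh : μf i = ((Finset.range N).filter (fun k => i+1 ≤ d (k+1))).card := rfl
        omega
    · intro h
      by_cases hl : l < N
      · have hsub : Finset.range (l+1) ⊆ (Finset.range N).filter (fun k => i+1 ≤ d (k+1)) := by
          intro k hk
          simp only [Finset.mem_range] at hk
          simp only [Finset.mem_filter, Finset.mem_range]
          refine ⟨by omega, le_trans h (dmono' (k+1) (l+1) (by omega) (by omega))⟩
        have := Finset.card_le_card hsub
        simp only [Finset.card_range] at this
        have hh : μf i = ((Finset.range N).filter (fun k => i+1 ≤ d (k+1))).card := rfl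
        omega
      · have := vanish (l+1) (by omega)
        omega
  have filterkey : ∀ l, (Finset.range (d 1)).filter (fun i => l+1 ≤ μf i)
      = Finset.range (d (l+1)) := by
    intro l
    ext i
    simp only [Finset.mem_filter, Finset.mem_range]
    constructor
    · rintro ⟨hi, h⟩
      have := (key2 l i).1 h
      omega
    · intro h
      have hd1 : d (l+1) ≤ d 1 := dmono' 1 (l+1) (by omega) (by omega)
      exact ⟨by omega, (key2 l i).2 (by omega)⟩
  have QE : ∀ l, (∑ i ∈ Finset.range (d 1), min l (μf i)) = E l := by
    intro l
    induction l with
    | zero => simpa using hE0.symm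
    | succ l ih =>
      have hsplit : ∀ i ∈ Finset.range (d 1),
          min (l+1) (μf i) = min l (μf i) + if l+1 ≤ μf i then 1 else 0 := by
        intro i _
        split_ifs with h <;> omega
      rw [Finset.sum_congr rfl hsplit, Finset.sum_add_distrib, ih, Finset.sum_boole]
      rw [filterkey l, Finset.card_range, hEd l]
      simp
  refine ⟨(List.range (d 1)).map μf, ?_, ?_⟩
  · show List.Pairwise _ _
    refine List.Pairwise.map μf ?_ (List.pairwise_lt_range (n := d 1))
    intro a b hab
    show μf b ≤ μf a
    refine Finset.card_le_card ?_
    intro k hk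
    simp only [Finset.mem_filter] at hk ⊢
    exact ⟨hk.1, by omega⟩
  · intro l
    rw [List.map_map, sum_map_range]
    exact QE l

lemma aSeq_zero (p q : ℕ → ℕ) (j : ℕ) : aSeq p q 0 j = 0 :=
  Nat.le_zero.1 (aSeq_le p q 0 j)

lemma Epart_zero (p q : ℕ → ℕ) (L : ℕ) : Epart p q L 0 = 0 := by
  simp [Epart, aSeq_zero]

lemma Epart_bound (p q : ℕ → ℕ) (L l : ℕ) :
    Epart p q L l ≤ ∑ j ∈ Finset.range L, q j :=
  Finset.sum_le_sum (fun j _ => min_le_right _ _)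


/-- In the `A_1` case, the total energies `E_l` of a path, computed via the
carrier recursion (carriers `u l j ∈ B^{1,l}`, initial carrier all-`1`,
related by the insertion form of the combinatorial `R`), are of the form
`E_l = Q_l(μ) = Σ_i min(l, μ_i)` for some partition `μ`. -/
theorem A1_energies_are_Ql_of_partition (L : ℕ) (brow : ℕ → List ℕ)
    (u : ℕ → ℕ → List ℕ)
    (hb : ∀ j < L, List.Chain' (· ≤ ·) (brow j) ∧ ∀ x ∈ brow j, x = 1 ∨ x = 2)
    (hu0 : ∀ l, u l 0 = List.replicate l 1)
    (hcar : ∀ l, ∀ j < L, (u l (j + 1)).length = l ∧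
      List.Chain' (· ≤ ·) (u l (j + 1)) ∧ ∀ x ∈ u l (j + 1), x = 1 ∨ x = 2)
    (hrel : ∀ l, ∀ j < L, ∃ b' : List ℕ,
      b'.length = (brow j).length ∧ List.Chain' (· ≤ ·) b' ∧
      (∀ x ∈ b', x = 1 ∨ x = 2) ∧
      rsInsertWord [brow j] (u l j) = rsInsertWord [u l (j + 1)] b') :
    ∃ μ : List ℕ, List.Pairwise (· ≥ ·) μ ∧
      ∀ l, 1 ≤ l →
        (∑ j ∈ Finset.range L, energyH [u l j] [brow j])
          = (μ.map (fun x => min l x)).sum := by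
  classical
  set p : ℕ → ℕ := fun j => (brow j).count 1 with hp
  set q : ℕ → ℕ := fun j => (brow j).count 2 with hq
  have hbrow : ∀ j, j < L → brow j = rowPQ (p j) (q j) := fun j hj =>
    sorted_binary _ (hb j hj).1 (hb j hj).2
  have haseqle := aSeq_le p q
  have haSeq_succ : ∀ l j, aSeq p q l (j+1)
      = min (aSeq p q l j + p j) l - min (aSeq p q l j) (q j) := fun l j => rfl
  have rowform : ∀ l j, j ≤ L → u l j = rowPQ (aSeq p q l j) (l - aSeq p q l j) := by
    intro l j
    induction j with
    | zero =>
      intro _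
      rw [hu0]
      show _ = rowPQ l (l - l)
      simp [rowPQ]
    | succ j ih =>
      intro hjL
      have hj : j < L := by omega
      have hroww := ih (le_of_lt hj)
      obtain ⟨hlen, hsort, hbin⟩ := hcar l j hj
      have hu' : u l (j+1) = rowPQ ((u l (j+1)).count 1) ((u l (j+1)).count 2) :=
        sorted_binary _ hsort hbin
      set A := (u l (j+1)).count 1 with hA'
      set B := (u l (j+1)).count 2 with hB'
      have hAB : A + B = l := by
        have := congrArg List.length hu'
        rw [rowPQ_length] at this
        omega
      obtain ⟨b', hblen, hbsort, hbbin, heq⟩ := hrel l j hj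
      have hb'eq : b' = rowPQ (b'.count 1) (b'.count 2) := sorted_binary _ hbsort hbbin
      rw [hroww, hbrow j hj, hu', hb'eq] at heq
      have hext := extract l (aSeq p q l j) (l - aSeq p q l j) (p j) (q j) A B
        (b'.count 1) (b'.count 2) (by have := haseqle l j; omega) hAB heq
      have hA : aSeq p q l (j+1) = A := by
        rw [haSeq_succ]
        have hle := haseqle l j
        omega
      rw [hu', hA]
      congr 1
      omega
  have hE : ∀ l, (∑ j ∈ Finset.range L, energyH [u l j] [brow j]) = Epart p q L l := by
    intro l
    refine Finset.sum_congr rfl (fun j hj => ?_)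
    rw [rowform l j (le_of_lt (Finset.mem_range.1 hj)),
      hbrow j (Finset.mem_range.1 hj), energy_formula]
  obtain ⟨FS, FT, hFS, _⟩ := exists_minrep p q L
  obtain ⟨μ, hμsort, hμ⟩ := partition_of_minrep hFS (Epart_zero p q L)
    (∑ j ∈ Finset.range L, q j) (Epart_bound p q L)
  exact ⟨μ, hμsort, fun l _ => by rw [hE l, hμ l]⟩
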